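/- Let C ⊆ dom(g) be a nonempty compact convex set and let F : Z → Z be monotone and Lipschitz continuous. If x ∈ C satisfies Θ(x | F,g,C) = 0 and there exists ε > 0 such that B(x,ε) ∩ C = B(x,ε) ∩ dom(g) (where B(x,ε) is the closed ball of radius ε around x), then x is a solution of HVI(F,g). -/

import Mathlib

noncomputable section

open scoped RealInnerProductSpace
open Filter Topology

variable {Z : Type*} [NormedAddCommGroup Z] [InnerProductSpace ℝ Z] [CompleteSpace Z]

/-- Effective domain of an extended-real-valued function. -/
def edom {Z : Type*} (g : Z → EReal) : Set Z := {z | g z < ⊤}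

/-- `g` is proper, convex and lower semicontinuous. -/
structure ProperConvexLsc (g : Z → EReal) : Prop where
  ne_bot : ∀ z, g z ≠ ⊥
  proper : ∃ z, g z < ⊤
  convex : ∀ x y : Z, ∀ a b : ℝ, 0 ≤ a → 0 ≤ b → a + b = 1 →
    g (a • x + b • y) ≤ (a : EReal) * g x + (b : EReal) * g y
  lsc : LowerSemicontinuous g

/-- Monotonicity of an operator on a real Hilbert space. -/
def IsMonotoneOp (F : Z → Z) : Prop := ∀ x y : Z, 0 ≤ ⟪F x - F y, x - y⟫

/-- Lipschitz continuity with (real) constant `L`. -/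
def IsLipOp (L : ℝ) (F : Z → Z) : Prop := ∀ x y : Z, ‖F x - F y‖ ≤ L * ‖x - y‖

/-- The bifunction `H^{(F,g)}(z,y) = ⟪F y, z - y⟫ + g z - g y`. -/
def Hb (F : Z → Z) (g : Z → EReal) (z y : Z) : EReal :=
  ((⟪F y, z - y⟫ : ℝ) : EReal) + g z - g y

/-- The localized dual gap function `Θ(z | F,g,C)`. -/
def gapFn (F : Z → Z) (g : Z → EReal) (C : Set Z) (z : Z) : EReal :=
  ⨆ y ∈ C, Hb F g z y

/-- The convex subdifferential of an extended-real-valued function. -/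
def subdiff (g : Z → EReal) (x : Z) : Set Z :=
  {ξ : Z | ∀ y : Z, ((⟪ξ, y - x⟫ : ℝ) : EReal) + g x ≤ g y}

/-- The solution set `zer(F + ∂g)`. -/
def zerFg (F : Z → Z) (g : Z → EReal) : Set Z := {z : Z | -F z ∈ subdiff g z}

/-- The normal cone to a set `C` at `z`. -/
def normalCone (C : Set Z) (z : Z) : Set Z :=
  {ξ : Z | z ∈ C ∧ ∀ z' ∈ C, ⟪ξ, z' - z⟫ ≤ 0}

/-- The solution set `zer(F + ∂g + N_C)`. -/
def zerFgN (F : Z → Z) (g : Z → EReal) (C : Set Z) : Set Z :=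
  {z : Z | ∃ ξ ∈ subdiff g z, ∃ p ∈ normalCone C z, F z + ξ + p = 0}

/-- The solution set `S₁` of problem (P): points of `S₂` solving the upper HVI over `S₂`. -/
def solP (F₁ : Z → Z) (g₁ : Z → EReal) (S₂ : Set Z) : Set Z :=
  {zs : Z | zs ∈ S₂ ∧ ∀ u ∈ S₂, 0 ≤ Hb F₁ g₁ u zs}

/-- `(α,ρ)`-weak sharpness of the solution set `S` of `HVI(F,g)`. -/
def WeakSharp (F : Z → Z) (g : Z → EReal) (S : Set Z) (α ρ : ℝ) : Prop :=
  ∀ zs ∈ S, ∀ z ∈ edom g,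
    (((α / ρ) * Metric.infDist z S ^ ρ : ℝ) : EReal) ≤ Hb F g z zs

/-- Support function of a set. -/
def suppFn (p : Z) (C : Set Z) : EReal := ⨆ z ∈ C, ((⟪p, z⟫ : ℝ) : EReal)

/-- The Fitzpatrick-type function `φ^{(F,g)}(z,u)`. -/
def phiFn (F : Z → Z) (g : Z → EReal) (z u : Z) : EReal :=
  ⨆ y ∈ edom g, (Hb F g z y + ((⟪y, u⟫ : ℝ) : EReal))

/-- `x = prox_{τ G}(u)`, via the variational characterization
`⟪u - x, v - x⟫ ≤ τ (G v - G x)` for all `v`. -/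
def IsProx (τ : ℝ) (G : Z → EReal) (u x : Z) : Prop :=
  ∀ v : Z, ((⟪u - x, v - x⟫ : ℝ) : EReal) ≤ (τ : EReal) * (G v - G x)

/-- The Tikhonov-regularized operator `V_k = F₂ + σ_k F₁`. -/
def Vop (F₁ F₂ : Z → Z) (σ : ℕ → ℝ) (k : ℕ) (x : Z) : Z := F₂ x + σ k • F₁ x

/-- The Tikhonov-regularized function `G_k = g₂ + σ_k g₁`. -/
def Gfun (g₁ g₂ : Z → EReal) (σ : ℕ → ℝ) (k : ℕ) (v : Z) : EReal :=
  g₂ v + ((σ k : ℝ) : EReal) * g₁ v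

/-- The Attouch–Czarnecki summability condition. -/
def ACcond (F₂ : Z → Z) (g₂ : Z → EReal) (S₂ : Set Z) (t σ : ℕ → ℝ) : Prop :=
  ∀ p : Z, (∃ zs : Z, p ∈ normalCone S₂ zs) →
    ∃ M : ℝ, ∀ K : ℕ,
      (∑ k ∈ Finset.Icc 1 K,
        ((t k : ℝ) : EReal) * ((⨆ zs ∈ S₂, phiFn F₂ g₂ zs (σ k • p)) - suppFn (σ k • p) S₂))
        ≤ (M : EReal)

/-- `T_K = ∑_{k=1}^K t_k`. -/
def Tsum (t : ℕ → ℝ) (K : ℕ) : ℝ := ∑ k ∈ Finset.Icc 1 K, t k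

/-- The ergodic average `z̄^K` (here `w k` plays the role of `z^{k+1/2}`). -/
def zbar (t : ℕ → ℝ) (w : ℕ → Z) (K : ℕ) : Z :=
  (Tsum t K)⁻¹ • ∑ k ∈ Finset.Icc 1 K, t k • w k

/-- Weights `γ_k = 1/∏_{i=1}^k (1 - t_i σ_i μ)` (so `γ_0 = 1`). -/
def gammaW (t σ : ℕ → ℝ) (μ : ℝ) (k : ℕ) : ℝ :=
  (∏ i ∈ Finset.Icc 1 k, (1 - t i * σ i * μ))⁻¹

/-- The weighted ergodic average used in the strongly monotone case. -/
def zbarW (t σ : ℕ → ℝ) (μ : ℝ) (w : ℕ → Z) (K : ℕ) : Z :=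
  (∑ i ∈ Finset.Icc 1 K, t i * σ i * gammaW t σ μ i)⁻¹ •
    ∑ i ∈ Finset.Icc 1 K, (t i * σ i * gammaW t σ μ i) • w i

/-- Convex tangent cone `T_C(x) = cl(⋃_{λ>0} (C - x)/λ)`. -/
def tangentConeCvx (C : Set Z) (x : Z) : Set Z :=
  closure {v : Z | ∃ lam : ℝ, 0 < lam ∧ ∃ c ∈ C, v = lam⁻¹ • (c - x)}

/-- Polar cone of a set. -/
def polarCone (K : Set Z) : Set Z := {z : Z | ∀ x ∈ K, ⟪z, x⟫ ≤ 0}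

/-- if `x ∈ C` has zero gap and `C` agrees with `dom(g)` near `x`,
then `x` solves `HVI(F,g)`. -/
theorem gap_zero_implies_solution
    (F : Z → Z) (g : Z → EReal) (L : ℝ)
    (hg : ProperConvexLsc g) (hF : IsMonotoneOp F) (hFL : IsLipOp L F)
    (C : Set Z) (hCne : C.Nonempty) (hCcp : IsCompact C) (hCcv : Convex ℝ C)
    (hCdom : C ⊆ edom g)
    (x : Z) (hx : x ∈ C) (hgap : gapFn F g C x = 0)
    (hball : ∃ ε : ℝ, 0 < ε ∧
      Metric.closedBall x ε ∩ C = Metric.closedBall x ε ∩ edom g) :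
    ∀ u : Z, 0 ≤ Hb F g u x := by
  classical
  obtain ⟨ε, hε, hball⟩ := hball
  -- F is continuous
  have hFc : Continuous F := by
    have hlip : LipschitzWith (Real.toNNReal |L|) F := by
      rw [lipschitzWith_iff_dist_le_mul]
      intro a b
      rw [dist_eq_norm, dist_eq_norm]
      calc ‖F a - F b‖ ≤ L * ‖a - b‖ := hFL a b
        _ ≤ |L| * ‖a - b‖ :=
            mul_le_mul_of_nonneg_right (le_abs_self L) (norm_nonneg _)
        _ = Real.toNNReal |L| * ‖a - b‖ := by
            rw [Real.coe_toNNReal _ (abs_nonneg L)]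
    exact hlip.continuous
  have hfin : ∀ z ∈ C, g z ≠ ⊤ := fun z hz => (hCdom hz).ne
  have hgx_ne_top : g x ≠ ⊤ := hfin x hx
  have hcoe : ∀ z : Z, g z ≠ ⊤ → g z = ((g z).toReal : EReal) := fun z hz =>
    (EReal.coe_toReal hz (hg.ne_bot z)).symm
  -- real form of Hb on finiteness points
  have hHb : ∀ z y : Z, g z ≠ ⊤ → g y ≠ ⊤ →
      Hb F g z y = ((⟪F y, z - y⟫ + (g z).toReal - (g y).toReal : ℝ) : EReal) := by
    intro z y hz hy
    rw [Hb, hcoe z hz, hcoe y hy]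
    norm_cast
  -- real form of convexity
  have hconv : ∀ y z : Z, g y ≠ ⊤ → g z ≠ ⊤ → ∀ t : ℝ, 0 ≤ t → t ≤ 1 →
      g ((1-t) • y + t • z) ≠ ⊤ ∧
      (g ((1-t) • y + t • z)).toReal ≤ (1-t) * (g y).toReal + t * (g z).toReal := by
    intro y z hy hz t ht0 ht1
    have h := hg.convex y z (1-t) t (by linarith) ht0 (by ring)
    rw [hcoe y hy, hcoe z hz] at h
    have h2 : g ((1-t) • y + t • z) ≤
        (((1-t) * (g y).toReal + t * (g z).toReal : ℝ) : EReal) := by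
      refine h.trans_eq ?_
      norm_cast
    refine ⟨?_, ?_⟩
    · exact ne_top_of_le_ne_top (EReal.coe_ne_top _) h2
    · have h3 := EReal.toReal_le_toReal h2 (hg.ne_bot _) (EReal.coe_ne_top _)
      rwa [EReal.toReal_coe] at h3
  -- Minty inequality on C
  have hMinty : ∀ y ∈ C, ⟪F y, x - y⟫ + (g x).toReal - (g y).toReal ≤ 0 := by
    intro y hy
    have h1 : Hb F g x y ≤ gapFn F g C x :=
      le_iSup₂ (f := fun y (_ : y ∈ C) => Hb F g x y) y hy
    rw [hgap, hHb x y hgx_ne_top (hfin y hy)] at h1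
    exact_mod_cast h1
  -- Stampacchia inequality on C (Minty → Stampacchia via convexity + continuity)
  have hStamp : ∀ y ∈ C, 0 ≤ ⟪F x, y - x⟫ + (g y).toReal - (g x).toReal := by
    intro y hy
    set f : ℝ → ℝ := fun t => ⟪F ((1-t) • x + t • y), y - x⟫ + (g y).toReal - (g x).toReal
      with hf
    have hfc : Continuous f := by
      apply Continuous.sub _ continuous_const
      apply Continuous.add _ continuous_const
      exact Continuous.inner (hFc.comp (((continuous_const.sub continuous_id).smul continuous_const).add (continuous_id.smul continuous_const))) continuous_const
    have hpos : ∀ t ∈ Set.Ioc (0:ℝ) 1, 0 ≤ f t := by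
      rintro t ⟨ht0, ht1⟩
      set w := (1-t) • x + t • y with hw
      have hwC : w ∈ C := hCcv hx hy (by linarith) ht0.le (by ring)
      have hM := hMinty w hwC
      have hconvw := (hconv x y hgx_ne_top (hfin y hy) t ht0.le ht1).2
      have hinner : ⟪F w, x - w⟫ = -t * ⟪F w, y - x⟫ := by
        have hxw : x - w = (-t) • (y - x) := by rw [hw]; module
        rw [hxw, real_inner_smul_right]
      simp only [hf]
      nlinarith [hM, hconvw, hinner, ht0]
    have htend : Tendsto f (𝓝[>] (0:ℝ)) (𝓝 (f 0)) :=
      (hfc.continuousAt).continuousWithinAt.tendsto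
    have hev : ∀ᶠ t in 𝓝[>] (0:ℝ), 0 ≤ f t := by
      filter_upwards [Ioc_mem_nhdsGT_of_mem (Set.mem_Ico.2 ⟨le_refl 0, zero_lt_one⟩)]
        with t ht using hpos t ht
    have h0 : 0 ≤ f 0 := ge_of_tendsto htend hev
    simpa [hf] using h0
  -- conclude
  intro u
  by_cases hu_top : g u = ⊤
  · have htop : Hb F g u x = ⊤ := by
      rw [Hb, hu_top, hcoe x hgx_ne_top]
      rw [EReal.add_top_of_ne_bot (EReal.coe_ne_bot _), EReal.top_sub_coe]
    rw [htop]; exact le_top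
  · by_cases hux : u = x
    · subst hux
      rw [hHb u u hu_top hu_top]
      simp
    · set t := min 1 (ε / ‖u - x‖) with htdef
      have hnorm : 0 < ‖u - x‖ := by
        rw [norm_pos_iff, sub_ne_zero]; exact hux
      have ht0 : 0 < t := lt_min one_pos (div_pos hε hnorm)
      have ht1 : t ≤ 1 := min_le_left _ _
      set w := (1-t) • x + t • u with hw
      have hwdom := hconv x u hgx_ne_top hu_top t ht0.le ht1
      have hwx : w - x = t • (u - x) := by rw [hw]; module
      have hwball : w ∈ Metric.closedBall x ε := by
        rw [Metric.mem_closedBall, dist_eq_norm, hwx, norm_smul,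
          Real.norm_eq_abs, abs_of_pos ht0]
        calc t * ‖u - x‖ ≤ (ε / ‖u - x‖) * ‖u - x‖ :=
              mul_le_mul_of_nonneg_right (min_le_right _ _) (norm_nonneg _)
          _ = ε := div_mul_cancel₀ _ hnorm.ne'
      have hwC : w ∈ C := by
        have hmem : w ∈ Metric.closedBall x ε ∩ edom g :=
          ⟨hwball, lt_top_iff_ne_top.2 hwdom.1⟩
        rw [← hball] at hmem
        exact hmem.2
      have hS := hStamp w hwC
      have hinner : ⟪F x, w - x⟫ = t * ⟪F x, u - x⟫ := by
        rw [hwx, real_inner_smul_right]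
      have key : 0 ≤ ⟪F x, u - x⟫ + (g u).toReal - (g x).toReal := by
        nlinarith [hS, hwdom.2, hinner, ht0]
      rw [hHb u x hu_top hgx_ne_top]
      exact_mod_cast key

end
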